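/- Two Hom-Lie bialgebras sl(2)_α and sl(2)_β, where α and β are the non-zero Lie bialgebra endomorphisms of sl(2,ℂ) determined by non-zero scalars b and b' respectively (α(H)=H, α(X±)=b^{±1}X±), are isomorphic if and only if b = b'. -/

import Mathlib

open TensorProduct

variable {k : Type*} [Field k]
variable {L : Type*} [AddCommGroup L] [Module k L]

/-- `[r₁₂, s₁₃]` -/
noncomputable def c1213 (β : L →ₗ[k] L →ₗ[k] L) (α : L →ₗ[k] L) :
    (L ⊗[k] L) ⊗[k] (L ⊗[k] L) →ₗ[k] L ⊗[k] (L ⊗[k] L) :=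
  (TensorProduct.map (TensorProduct.lift β) (TensorProduct.map α α)) ∘ₗ
    (TensorProduct.tensorTensorTensorComm k L L L L).toLinearMap

/-- `[r₁₂, s₂₃]` -/
noncomputable def c1223 (β : L →ₗ[k] L →ₗ[k] L) (α : L →ₗ[k] L) :
    (L ⊗[k] L) ⊗[k] (L ⊗[k] L) →ₗ[k] L ⊗[k] (L ⊗[k] L) :=
  (TensorProduct.map α ((TensorProduct.map (TensorProduct.lift β) α) ∘ₗ
      (TensorProduct.assoc k L L L).symm.toLinearMap)) ∘ₗ
    (TensorProduct.assoc k L L (L ⊗[k] L)).toLinearMap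

/-- `[r₁₃, s₂₃]` -/
noncomputable def c1323 (β : L →ₗ[k] L →ₗ[k] L) (α : L →ₗ[k] L) :
    (L ⊗[k] L) ⊗[k] (L ⊗[k] L) →ₗ[k] L ⊗[k] (L ⊗[k] L) :=
  (TensorProduct.assoc k L L L).toLinearMap ∘ₗ
    (TensorProduct.map (TensorProduct.map α α) (TensorProduct.lift β)) ∘ₗ
    (TensorProduct.tensorTensorTensorComm k L L L L).toLinearMap

/-- `[[r,s]]^α = [r₁₂,s₁₃] + [r₁₂,s₂₃] + [r₁₃,s₂₃]` -/
noncomputable def chybe (β : L →ₗ[k] L →ₗ[k] L) (α : L →ₗ[k] L) (r s : L ⊗[k] L) :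
    L ⊗[k] (L ⊗[k] L) :=
  c1213 β α (r ⊗ₜ s) + c1223 β α (r ⊗ₜ s) + c1323 β α (r ⊗ₜ s)

/-- `ad_x` on `L ⊗ L`. -/
noncomputable def adT2 (β : L →ₗ[k] L →ₗ[k] L) (α : L →ₗ[k] L) (x : L) :
    L ⊗[k] L →ₗ[k] L ⊗[k] L :=
  TensorProduct.map (β x) α + TensorProduct.map α (β x)

/-- `ad_x` on `L ⊗ L ⊗ L`. -/
noncomputable def adT3 (β : L →ₗ[k] L →ₗ[k] L) (α : L →ₗ[k] L) (x : L) :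
    L ⊗[k] (L ⊗[k] L) →ₗ[k] L ⊗[k] (L ⊗[k] L) :=
  TensorProduct.map (β x) (TensorProduct.map α α) +
    TensorProduct.map α (TensorProduct.map (β x) α) +
    TensorProduct.map α (TensorProduct.map α (β x))

/-- the cyclic permutation on `L ⊗ L ⊗ L`, `x⊗y⊗z ↦ z⊗x⊗y`. -/
noncomputable def cyc : L ⊗[k] (L ⊗[k] L) →ₗ[k] L ⊗[k] (L ⊗[k] L) :=
  (TensorProduct.comm k (L ⊗[k] L) L).toLinearMap ∘ₗ
    (TensorProduct.assoc k L L L).symm.toLinearMap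

/-- the cyclic sum `↻` on `L ⊗ L ⊗ L`. -/
noncomputable def cycSum : L ⊗[k] (L ⊗[k] L) →ₗ[k] L ⊗[k] (L ⊗[k] L) :=
  LinearMap.id + cyc + cyc ∘ₗ cyc

/-- `Δ = ad(r) : x ↦ ad_x(r)` as a linear map. -/
noncomputable def adr (β : L →ₗ[k] L →ₗ[k] L) (α : L →ₗ[k] L) (r : L ⊗[k] L) :
    L →ₗ[k] L ⊗[k] L where
  toFun x := adT2 β α x r
  map_add' x y := by
    simp only [adT2, map_add, TensorProduct.map_add_left, TensorProduct.map_add_right,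
      LinearMap.add_apply]
    abel
  map_smul' c x := by
    simp only [adT2, map_smul, TensorProduct.map_smul_left, TensorProduct.map_smul_right,
      LinearMap.add_apply, LinearMap.smul_apply, RingHom.id_apply, smul_add]

/-- Hom-Lie algebra axioms. -/
def IsHomLie (β : L →ₗ[k] L →ₗ[k] L) (α : L →ₗ[k] L) : Prop :=
  (∀ x y, β x y = - β y x) ∧
  (∀ x y, α (β x y) = β (α x) (α y)) ∧
  (∀ x y z, β (β x y) (α z) + β (β z x) (α y) + β (β y z) (α x) = 0)

/-- Hom-Lie coalgebra axioms. -/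
def IsHomLieCoalg (Δ : L →ₗ[k] L ⊗[k] L) (α : L →ₗ[k] L) : Prop :=
  (∀ x, Δ (α x) = TensorProduct.map α α (Δ x)) ∧
  (∀ x, TensorProduct.comm k L L (Δ x) = - Δ x) ∧
  (∀ x, cycSum (TensorProduct.map α Δ (Δ x)) = 0)

/-- Hom-Lie bialgebra axioms. -/
def IsHomLieBialg (β : L →ₗ[k] L →ₗ[k] L) (Δ : L →ₗ[k] L ⊗[k] L) (α : L →ₗ[k] L) : Prop :=
  IsHomLie β α ∧ IsHomLieCoalg Δ α ∧
  (∀ x y, Δ (β x y) = adT2 β α (α x) (Δ y) - adT2 β α (α y) (Δ x))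

/-! ### `sl(2,ℂ)` realized on `Fin 3 → ℂ` with basis `H = e₀`, `X₊ = e₁`, `X₋ = e₂`. -/

/-- `H`. -/
noncomputable def slH : Fin 3 → ℂ := Pi.single 0 1
/-- `X₊`. -/
noncomputable def slXp : Fin 3 → ℂ := Pi.single 1 1
/-- `X₋`. -/
noncomputable def slXm : Fin 3 → ℂ := Pi.single 2 1

/-- the `sl(2)` bracket: `[X₊,X₋] = H`, `[H,X₊] = 2X₊`, `[H,X₋] = -2X₋`-/
noncomputable def slBr : (Fin 3 → ℂ) →ₗ[ℂ] (Fin 3 → ℂ) →ₗ[ℂ] (Fin 3 → ℂ) :=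
  LinearMap.mk₂ ℂ
    (fun u v => ![u 1 * v 2 - u 2 * v 1, 2 * (u 0 * v 1 - u 1 * v 0),
      -2 * (u 0 * v 2 - u 2 * v 0)])
    (by intro u u' v; funext i; fin_cases i <;> simp <;> ring)
    (by intro c u v; funext i; fin_cases i <;> simp <;> ring)
    (by intro u v v'; funext i; fin_cases i <;> simp <;> ring)
    (by intro c u v; funext i; fin_cases i <;> simp <;> ring)

/-- the standard cobracket of `sl(2)`: `Δ(H) = 0`, `Δ(X±) = (1/2)(X± ⊗ H − H ⊗ X±)`. -/
noncomputable def slCobr : (Fin 3 → ℂ) →ₗ[ℂ] (Fin 3 → ℂ) ⊗[ℂ] (Fin 3 → ℂ) :=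
  (Pi.basisFun ℂ (Fin 3)).constr ℂ
    ![0, (1 / 2 : ℂ) • (slXp ⊗ₜ slH - slH ⊗ₜ slXp),
      (1 / 2 : ℂ) • (slXm ⊗ₜ slH - slH ⊗ₜ slXm)]

/-- the Lie bialgebra endomorphism of `sl(2)` determined by `b`:
`α(H) = H`, `α(X₊) = b X₊`, `α(X₋) = b⁻¹ X₋`. -/
noncomputable def slAlpha (b : ℂ) : (Fin 3 → ℂ) →ₗ[ℂ] (Fin 3 → ℂ) :=
  (Pi.basisFun ℂ (Fin 3)).constr ℂ ![slH, b • slXp, b⁻¹ • slXm]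

/-- the standard classical `r`-matrix `r = X₊ ⊗ X₋ + (1/4) H ⊗ H` of `sl(2)`. -/
noncomputable def slR : (Fin 3 → ℂ) ⊗[ℂ] (Fin 3 → ℂ) :=
  slXp ⊗ₜ slXm + (1 / 4 : ℂ) • (slH ⊗ₜ slH)


section Aux

lemma slAlpha_apply (b : ℂ) (v : Fin 3 → ℂ) :
    slAlpha b v = ![v 0, b * v 1, b⁻¹ * v 2] := by
  funext i
  fin_cases i <;>
    simp [slAlpha, Module.Basis.constr_apply_fintype, Fin.sum_univ_three, slH, slXp, slXm, mul_comm,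
      Matrix.vecHead, Matrix.vecTail]

lemma slCobr_apply (v : Fin 3 → ℂ) :
    slCobr v = (v 1 * (1/2)) • (slXp ⊗ₜ slH - slH ⊗ₜ slXp)
      + (v 2 * (1/2)) • (slXm ⊗ₜ slH - slH ⊗ₜ slXm) := by
  simp [slCobr, Module.Basis.constr_apply_fintype, Fin.sum_univ_three, smul_smul, mul_comm]

/-- evaluation of a tensor at a pair of coordinates -/
noncomputable def ev (i j : Fin 3) : (Fin 3 → ℂ) ⊗[ℂ] (Fin 3 → ℂ) →ₗ[ℂ] ℂ :=
  TensorProduct.lift (LinearMap.mk₂ ℂ (fun u v => u i * v j)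
    (fun u u' v => by simp [add_mul]) (fun c u v => by simp [mul_assoc])
    (fun u v v' => by simp [mul_add]) (fun c u v => by simp; ring))

@[simp] lemma ev_tmul (i j : Fin 3) (u v : Fin 3 → ℂ) : ev i j (u ⊗ₜ v) = u i * v j := by
  simp [ev]

@[simp] lemma slH_0 : slH 0 = 1 := by simp [slH]
@[simp] lemma slH_1 : slH 1 = 0 := by simp [slH]
@[simp] lemma slH_2 : slH 2 = 0 := by simp [slH]
@[simp] lemma slXp_0 : slXp 0 = 0 := by simp [slXp, Pi.single_apply]
@[simp] lemma slXp_1 : slXp 1 = 1 := by simp [slXp]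
@[simp] lemma slXp_2 : slXp 2 = 0 := by simp [slXp, Pi.single_apply]
@[simp] lemma slXm_0 : slXm 0 = 0 := by simp [slXm, Pi.single_apply]
@[simp] lemma slXm_1 : slXm 1 = 0 := by simp [slXm, Pi.single_apply]
@[simp] lemma slXm_2 : slXm 2 = 1 := by simp [slXm]

lemma slBr_apply (u v : Fin 3 → ℂ) :
    slBr u v = ![u 1 * v 2 - u 2 * v 1, 2 * (u 0 * v 1 - u 1 * v 0),
      -2 * (u 0 * v 2 - u 2 * v 0)] := rfl

end Aux

/-- the Hom-Lie bialgebras `sl(2)_α` and `sl(2)_β` attached to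
non-zero scalars `b` and `b'` are isomorphic iff `b = b'`. -/
theorem stmt11 (b b' : ℂ) (hb : b ≠ 0) (hb' : b' ≠ 0) :
    (∃ γ : (Fin 3 → ℂ) ≃ₗ[ℂ] (Fin 3 → ℂ),
        (∀ x, γ (slAlpha b x) = slAlpha b' (γ x)) ∧
        (∀ x y, γ ((LinearMap.compr₂ slBr (slAlpha b)) x y) =
          (LinearMap.compr₂ slBr (slAlpha b')) (γ x) (γ y)) ∧
        (∀ x, (slCobr ∘ₗ slAlpha b') (γ x) =
          TensorProduct.map (γ : (Fin 3 → ℂ) →ₗ[ℂ] (Fin 3 → ℂ))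
            (γ : (Fin 3 → ℂ) →ₗ[ℂ] (Fin 3 → ℂ)) ((slCobr ∘ₗ slAlpha b) x)))
    ↔ b = b' := by
  constructor
  · rintro ⟨γ, h1, h2, h3⟩
    have eH : slAlpha b slH = slH := by
      rw [slAlpha_apply]; funext i; fin_cases i <;> simp
    have eP : slAlpha b slXp = b • slXp := by
      rw [slAlpha_apply]; funext i; fin_cases i <;> simp
    have ecH : slCobr slH = 0 := by rw [slCobr_apply]; simp
    have hA := h3 slH
    rw [LinearMap.comp_apply, LinearMap.comp_apply, eH, ecH, map_zero] at hA
    have hA1 : γ slH 1 = 0 := by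
      have := congrArg (ev 1 0) hA
      rw [slCobr_apply] at this
      simp [slAlpha_apply, hb'] at this
      exact this
    have hA2 : γ slH 2 = 0 := by
      have := congrArg (ev 2 0) hA
      rw [slCobr_apply] at this
      simp [slAlpha_apply, inv_eq_zero, hb'] at this
      exact this
    have hB := h1 slXp
    rw [eP, map_smul] at hB
    have hB1 : b * γ slXp 1 = b' * γ slXp 1 := by
      have := congrFun hB 1
      simpa [slAlpha_apply] using this
    have hB2 : b * γ slXp 2 = b'⁻¹ * γ slXp 2 := by
      have := congrFun hB 2
      simpa [slAlpha_apply] using this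
    have hC := h3 slXp
    rw [LinearMap.comp_apply, LinearMap.comp_apply, eP, map_smul] at hC
    have hC2 : b'⁻¹ * γ slXp 2 = b * (γ slXp 2 * γ slH 0) := by
      have := congrArg (ev 2 0) hC
      rw [slCobr_apply, slCobr_apply] at this
      simp [slAlpha_apply] at this
      linear_combination 2 * this - b * γ slXp 0 * hA2
    have hD := h2 slH slXp
    have e2 : (LinearMap.compr₂ slBr (slAlpha b)) slH slXp = (2 * b) • slXp := by
      rw [LinearMap.compr₂_apply, slBr_apply, slAlpha_apply]
      funext i; fin_cases i <;> simp <;> ring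
    rw [e2, map_smul, LinearMap.compr₂_apply] at hD
    have hD0 : γ slXp 0 = 0 := by
      have := congrFun hD 0
      simp [slAlpha_apply, slBr_apply] at this
      have h' : (2 * b) * γ slXp 0 = 0 := by
        linear_combination this + γ slXp 2 * hA1 - γ slXp 1 * hA2
      exact (mul_eq_zero.mp h').resolve_left (mul_ne_zero two_ne_zero hb)
    have hD2 : 2 * b * γ slXp 2 = -(2 * (b'⁻¹ * (γ slH 0 * γ slXp 2))) := by
      have := congrFun hD 2
      simp [slAlpha_apply, slBr_apply] at this
      linear_combination this + 2 * b'⁻¹ * γ slXp 0 * hA2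
    by_cases hp1 : γ slXp 1 = 0
    · exfalso
      have hp2 : γ slXp 2 = 0 := by
        by_contra hp2
        have hg : γ slH 0 = 1 := by
          have h0 : b * (1 - γ slH 0) * γ slXp 2 = 0 := by linear_combination hB2 + hC2
          rcases mul_eq_zero.mp h0 with h | h
          · rcases mul_eq_zero.mp h with h | h
            · exact absurd h hb
            · exact (sub_eq_zero.mp h).symm
          · exact absurd h hp2
        have h0 : (2 : ℂ) * b * γ slXp 2 = 0 := by
          rw [hg] at hD2
          linear_combination (hD2 + 2 * hB2) / 2
        rcases mul_eq_zero.mp h0 with h | h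
        · rcases mul_eq_zero.mp h with h | h
          · norm_num at h
          · exact hb h
        · exact hp2 h
      have hz : γ slXp = 0 := by
        funext i; fin_cases i
        · exact hD0
        · exact hp1
        · exact hp2
      have hinj : slXp = 0 := γ.injective (by simpa using hz)
      have := congrFun hinj 1
      simp at this
    · have h0 : (b - b') * γ slXp 1 = 0 := by linear_combination hB1
      rcases mul_eq_zero.mp h0 with h | h
      · exact sub_eq_zero.mp h
      · exact absurd h hp1
  · rintro rfl
    refine ⟨LinearEquiv.refl ℂ _, fun x => rfl, fun x y => rfl, fun x => ?_⟩
    simp
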